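/- Let G be a finite group with |G| > 1 and let C be a generating set of G. If X is a normal C-closed generating set for G, then X \ (X ∩ Φ(G;C)) is also a normal C-closed generating set for G. -/

import Mathlib

namespace NETCayley

variable {G : Type*} [Group G]

/-- `Aut(G;C)`: the subgroup of `MulAut G` consisting of automorphisms `σ` with `C^σ = C`. -/
def autSub (C : Set G) : Subgroup (MulAut G) where
  carrier := {σ : MulAut G | ⇑σ '' C = C}
  one_mem' := by simp
  mul_mem' := by
    intro a b ha hb
    rw [Set.mem_setOf_eq] at ha hb ⊢
    have h : ⇑(a * b) = ⇑a ∘ ⇑b := rfl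
    rw [h, Set.image_comp, hb, ha]
  inv_mem' := by
    intro a ha
    rw [Set.mem_setOf_eq] at ha ⊢
    conv_lhs => rw [← ha]
    rw [← Set.image_comp]
    have h : ⇑a⁻¹ ∘ ⇑a = id := by funext x; simp
    rw [h, Set.image_id]

/-- `A(G;C)`: proper normal `Aut(G;C)`-invariant subgroups of `G`. -/
def setA (C : Set G) : Set (Subgroup G) :=
  {N | N.Normal ∧ N ≠ ⊤ ∧ ∀ σ ∈ autSub C, N.map (σ : MulAut G).toMonoidHom = N}

/-- `A_max(G;C)`: maximal (by inclusion) elements of `A(G;C)`. -/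
def setAmax (C : Set G) : Set (Subgroup G) :=
  {N | N ∈ setA C ∧ ∀ M ∈ setA C, N ≤ M → N = M}

/-- `Φ(G;C)`: the intersection of all members of `A_max(G;C)`. -/
def PhiC (C : Set G) : Subgroup G := sInf (setAmax C)

/-- `X` is normal `C`-closed: `(x^g)^σ ∈ X` for all `x ∈ X`, `g ∈ G`, `σ ∈ Aut(G;C)`. -/
def NormalCClosed (C X : Set G) : Prop :=
  ∀ x ∈ X, ∀ g : G, ∀ σ ∈ autSub C, σ (g⁻¹ * x * g) ∈ X

/-- The normal `C`-closure of `X`: `{(x^g)^σ : x ∈ X, g ∈ G, σ ∈ Aut(G;C)}`. -/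
def normalCClosure (C X : Set G) : Set G :=
  {y | ∃ x ∈ X, ∃ g : G, ∃ σ ∈ autSub C, σ (g⁻¹ * x * g) = y}

/-- The orbit of `c` under the natural action of `Aut(G;C)`. -/
def orbitC (C : Set G) (c : G) : Set G := {y | ∃ σ ∈ autSub C, σ c = y}

/-- `C` is a transitive set: either `Aut(G;C)` is transitive on `C`, or there are exactly two
orbits `C₊`, `C₋` on `C` with `C = C₊ ∪ C₋` and `C₋ = C₊⁻¹`. -/
def TransSet (C : Set G) : Prop :=
  (∀ c ∈ C, ∀ c' ∈ C, ∃ σ ∈ autSub C, σ c = c') ∨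
  (∃ cp ∈ C, ∃ cm ∈ C, orbitC C cp ≠ orbitC C cm ∧
    C = orbitC C cp ∪ orbitC C cm ∧ orbitC C cm = (orbitC C cp)⁻¹)

/-- A transitive inverse-closed generating set of `G`. -/
def IsTransGenSet (C : Set G) : Prop :=
  (1 : G) ∉ C ∧ (∀ c ∈ C, c⁻¹ ∈ C) ∧ Subgroup.closure C = ⊤ ∧ TransSet C


/-- If `X` is a normal `C`-closed generating set for `G`, then
`X \ (X ∩ Φ(G;C))` is also a normal `C`-closed generating set for `G`. -/
theorem stmt0 {G : Type*} [Group G] [Finite G] [Nontrivial G] (C : Set G)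
    (hC : Subgroup.closure C = ⊤) (X : Set G)
    (hX1 : NormalCClosed C X) (hX2 : Subgroup.closure X = ⊤) :
    NormalCClosed C (X \ (X ∩ (PhiC C : Set G))) ∧
      Subgroup.closure (X \ (X ∩ (PhiC C : Set G))) = ⊤ := by
  set S : Set G := X \ (X ∩ (PhiC C : Set G)) with hS
  -- Part 1: S is normal C-closed
  have part1 : NormalCClosed C S := by
    intro x hx g σ hσ
    obtain ⟨hxX, hxn⟩ := hx
    refine ⟨hX1 x hxX g σ hσ, ?_⟩
    intro ⟨_, hmem⟩
    apply hxn
    refine ⟨hxX, ?_⟩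
    rw [SetLike.mem_coe, PhiC, Subgroup.mem_sInf] at hmem ⊢
    intro N hN
    have hNA := hN.1
    obtain ⟨hnorm, -, hinv⟩ := hNA
    have hmap := hinv σ hσ
    have h1 : σ (g⁻¹ * x * g) ∈ N.map σ.toMonoidHom := by
      rw [hmap]; exact hmem N hN
    obtain ⟨n, hn, heq⟩ := h1
    have : g⁻¹ * x * g ∈ N := by
      have := σ.injective heq
      rwa [← this]
    have h2 := hnorm.conj_mem _ this g
    simpa [mul_assoc] using h2
  refine ⟨part1, ?_⟩
  -- Part 2
  have hconj : ∀ x ∈ S, ∀ g : G, g⁻¹ * x * g ∈ S := by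
    intro x hx g
    have := part1 x hx g 1 (one_mem _)
    simpa using this
  have hsig : ∀ σ ∈ autSub C, ∀ x ∈ S, σ x ∈ S := by
    intro σ hσ x hx
    have := part1 x hx 1 σ hσ
    simpa using this
  set H : Subgroup G := Subgroup.closure S with hH
  by_contra hne
  -- H is invariant under autSub C
  have hmaple : ∀ σ ∈ autSub C, H.map (σ : MulAut G).toMonoidHom ≤ H := by
    intro σ hσ
    rw [Subgroup.map_le_iff_le_comap, hH, Subgroup.closure_le]
    intro s hs
    exact Subgroup.subset_closure (hsig σ hσ s hs)
  have hmapeq : ∀ σ ∈ autSub C, H.map (σ : MulAut G).toMonoidHom = H := by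
    intro σ hσ
    refine le_antisymm (hmaple σ hσ) ?_
    have h1 := hmaple σ⁻¹ (inv_mem hσ)
    have h2 := Subgroup.map_mono (f := (σ : MulAut G).toMonoidHom) h1
    rw [Subgroup.map_map] at h2
    have h3 : ((σ : MulAut G).toMonoidHom.comp ((σ⁻¹ : MulAut G)).toMonoidHom) =
        MonoidHom.id G := by
      ext x; simp
    rwa [h3, Subgroup.map_id] at h2
  -- H is normal
  have hnorm : H.Normal := by
    constructor
    intro n hn g
    have hle : H.map (MulAut.conj g).toMonoidHom ≤ H := by
      rw [Subgroup.map_le_iff_le_comap, hH, Subgroup.closure_le]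
      intro s hs
      have := hconj s hs g⁻¹
      simp only [inv_inv] at this
      simpa [Subgroup.mem_comap, MulAut.conj_apply, mul_assoc] using
        Subgroup.subset_closure this
    have : (MulAut.conj g) n ∈ H.map (MulAut.conj g).toMonoidHom :=
      ⟨n, hn, rfl⟩
    simpa [MulAut.conj_apply, mul_assoc] using hle this
  have hHA : H ∈ setA C := ⟨hnorm, hne, hmapeq⟩
  -- find a maximal element above H
  have hfin : ({M | M ∈ setA C ∧ H ≤ M} : Set (Subgroup G)).Finite := Set.toFinite _
  obtain ⟨M, ⟨hMA, hHM⟩, hMmax⟩ :=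
    Set.Finite.exists_maximalFor id _ hfin ⟨H, hHA, le_refl H⟩
  have hMamax : M ∈ setAmax C := by
    refine ⟨hMA, ?_⟩
    intro M' hM' hle
    exact le_antisymm hle (hMmax ⟨hM', le_trans hHM hle⟩ hle)
  have hPhiM : PhiC C ≤ M := sInf_le hMamax
  have hXM : X ⊆ (M : Set G) := by
    intro x hx
    by_cases hphi : x ∈ PhiC C
    · exact hPhiM hphi
    · have hxS : x ∈ S := ⟨hx, fun h => hphi h.2⟩
      exact hHM (Subgroup.subset_closure hxS)
  have : (⊤ : Subgroup G) ≤ M := by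
    rw [← hX2, Subgroup.closure_le]; exact hXM
  exact hMA.2.1 (top_le_iff.mp this)

end NETCayley
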